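/- Let K = ℚ(t) and for integers s ≥ 0 let F(0,s) ∈ K be the residue (coefficient of Y^{−1}) of 1/(Y^{2s} D(Y)), where D(Y) = e^{Y/2}(1+Yt)² − e^{−Y/2}(1−Yt)². Then F(0,s) − (−1)^s·2^{−2s−2}·t^{s−1} is either zero or a rational function of t of total degree strictly less than s − 1. -/

import Mathlib

open PowerSeries

/-- `N(Y) = (1 - λY²/2)(1 - Y²t²) + 4t` as a formal power series in `Y` over `K = ℚ(t)`. -/
noncomputable def Nser (lam : ℚ) : PowerSeries (RatFunc ℚ) :=
  (1 - PowerSeries.C (R := RatFunc ℚ) (algebraMap ℚ (RatFunc ℚ) lam / 2) *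
      PowerSeries.X ^ 2) *
    (1 - PowerSeries.C (R := RatFunc ℚ) (RatFunc.X ^ 2) * PowerSeries.X ^ 2) +
  PowerSeries.C (R := RatFunc ℚ) (4 * RatFunc.X)

/-- `D(Y) = e^{Y/2}(1+Yt)² - e^{-Y/2}(1-Yt)²` as a formal power series in `Y` over
`K = ℚ(t)`. -/
noncomputable def DserK : PowerSeries (RatFunc ℚ) :=
  PowerSeries.rescale (algebraMap ℚ (RatFunc ℚ) (1 / 2))
      (PowerSeries.exp (RatFunc ℚ)) *
      (1 + PowerSeries.C (R := RatFunc ℚ) RatFunc.X * PowerSeries.X) ^ 2 -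
    PowerSeries.rescale (algebraMap ℚ (RatFunc ℚ) (-(1 / 2)))
      (PowerSeries.exp (RatFunc ℚ)) *
      (1 - PowerSeries.C (R := RatFunc ℚ) RatFunc.X * PowerSeries.X) ^ 2

/-- `F(k,s)`: the residue (coefficient of `Y⁻¹`) of the formal Laurent series
`N(Y)^k / (Y^{2s} D(Y))` over `K = ℚ(t)`. -/
noncomputable def Fres (lam : ℚ) (k : ℕ) (s : ℤ) : RatFunc ℚ :=
  ((((Nser lam ^ k : PowerSeries (RatFunc ℚ)) : LaurentSeries (RatFunc ℚ))) /
    (((PowerSeries.X : PowerSeries (RatFunc ℚ)) : LaurentSeries (RatFunc ℚ)) ^ (2 * s) *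
      ((DserK : PowerSeries (RatFunc ℚ)) : LaurentSeries (RatFunc ℚ)))).coeff (-1)

namespace Stmt14

noncomputable section

local notation "K" => RatFunc ℚ
local notation "t" => (RatFunc.X : RatFunc ℚ)

/-! ### Degree bookkeeping -/

/-- `f` is zero or has total degree at most `d`. -/
def Dle (f : K) (d : ℤ) : Prop := f = 0 ∨ f.intDegree ≤ d

lemma Dle_zero (d : ℤ) : Dle 0 d := Or.inl rfl

lemma Dle.mono {f : K} {d d' : ℤ} (h : Dle f d) (hd : d ≤ d') : Dle f d' :=
  h.imp id fun h2 => h2.trans hd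

lemma Dle_add {f g : K} {d : ℤ} (hf : Dle f d) (hg : Dle g d) : Dle (f + g) d := by
  rcases hf with rfl | hf
  · simpa using hg
  by_cases hg0 : g = 0
  · subst hg0; rw [add_zero]; exact Or.inr hf
  rcases hg with rfl | hg
  · exact absurd rfl hg0
  by_cases hfg : f + g = 0
  · exact Or.inl hfg
  exact Or.inr ((RatFunc.intDegree_add_le hg0 hfg).trans (max_le hf hg))

lemma Dle_neg {f : K} {d : ℤ} (hf : Dle f d) : Dle (-f) d := by
  rcases hf with rfl | hf
  · simpa using Dle_zero d
  · exact Or.inr (by simpa [RatFunc.intDegree_neg] using hf)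

lemma Dle_sub {f g : K} {d : ℤ} (hf : Dle f d) (hg : Dle g d) : Dle (f - g) d := by
  rw [sub_eq_add_neg]; exact Dle_add hf (Dle_neg hg)

lemma Dle_mul {f g : K} {a b : ℤ} (hf : Dle f a) (hg : Dle g b) : Dle (f * g) (a + b) := by
  by_cases hf0 : f = 0
  · exact Or.inl (by simp [hf0])
  by_cases hg0 : g = 0
  · exact Or.inl (by simp [hg0])
  rcases hf with rfl | hf
  · exact absurd rfl hf0
  rcases hg with rfl | hg
  · exact absurd rfl hg0
  exact Or.inr (by rw [RatFunc.intDegree_mul hf0 hg0]; exact add_le_add hf hg)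

lemma Dle_sum {ι : Type*} (s : Finset ι) (F : ι → K) {d : ℤ}
    (h : ∀ i ∈ s, Dle (F i) d) : Dle (∑ i ∈ s, F i) d := by
  classical
  induction s using Finset.induction_on with
  | empty => simpa using Dle_zero d
  | insert _ _ hx ih =>
    rw [Finset.sum_insert hx]
    exact Dle_add (h _ (Finset.mem_insert_self _ _))
      (ih fun i hi => h i (Finset.mem_insert_of_mem hi))

lemma intDegree_inv {f : K} (hf : f ≠ 0) : (f⁻¹).intDegree = -f.intDegree := by
  have h := RatFunc.intDegree_mul hf (inv_ne_zero hf)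
  rw [mul_inv_cancel₀ hf, RatFunc.intDegree_one] at h
  linarith

lemma intDegree_X_pow (n : ℕ) : ((t ^ n : K)).intDegree = n := by
  induction n with
  | zero => simp
  | succ n ih =>
    rw [pow_succ, RatFunc.intDegree_mul (pow_ne_zero _ RatFunc.X_ne_zero) RatFunc.X_ne_zero,
      ih, RatFunc.intDegree_X]
    push_cast; ring

lemma intDegree_X_zpow (e : ℤ) : ((t ^ e : K)).intDegree = e := by
  rcases e with n | n
  · rw [Int.ofNat_eq_coe, zpow_natCast, intDegree_X_pow]
  · rw [zpow_negSucc, intDegree_inv (pow_ne_zero _ RatFunc.X_ne_zero), intDegree_X_pow]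
    simp [Int.negSucc_eq]

lemma C_ne_zero {q : ℚ} (hq : q ≠ 0) : (RatFunc.C q : K) ≠ 0 :=
  fun h => hq (RatFunc.C.injective (by simpa using h))

lemma Dle_C (q : ℚ) : Dle (RatFunc.C q) 0 := by
  by_cases hq : q = 0
  · simp [hq, Dle_zero]
  · exact Or.inr (RatFunc.intDegree_C q).le

lemma Dle_t : Dle t 1 := Or.inr (by simp)

lemma algebraMap_eq_C' (q : ℚ) : algebraMap ℚ K q = RatFunc.C q := by
  rw [eq_ratCast (algebraMap ℚ K), eq_ratCast (RatFunc.C : ℚ →+* K)]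

lemma Dle_algebraMap (q : ℚ) : Dle (algebraMap ℚ K q) 0 := by
  rw [algebraMap_eq_C']; exact Dle_C q

/-- the polynomial `1 + 4t` -/
lemma p0_eq : (1 + 4 * t : K) = algebraMap (Polynomial ℚ) K (1 + 4 * Polynomial.X) := by
  simp [map_add, map_mul, map_one, map_ofNat, RatFunc.algebraMap_X]

lemma p0_ne : (1 + 4 * t : K) ≠ 0 := by
  rw [p0_eq]
  apply RatFunc.algebraMap_ne_zero
  intro h
  have := congrArg (fun p => Polynomial.coeff p 1) h
  simp [Polynomial.coeff_one] at this

lemma p0_intDegree : (1 + 4 * t : K).intDegree = 1 := by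
  rw [p0_eq, RatFunc.intDegree_polynomial]
  norm_cast
  compute_degree!

lemma Dle_cancel_p0 {f : K} {d : ℤ} (h : Dle ((1 + 4 * t) * f) (d + 1)) : Dle f d := by
  by_cases hf : f = 0
  · exact Or.inl hf
  rcases h with h | h
  · exact absurd (by rcases mul_eq_zero.1 h with h' | h'; exacts [absurd h' p0_ne, h']) hf
  · rw [RatFunc.intDegree_mul p0_ne hf, p0_intDegree] at h
    exact Or.inr (by linarith)

/-! ### Coefficients of `D` -/

/-- odd part coefficient -/
def qa (n : ℕ) : ℚ := ((2⁻¹ : ℚ) ^ n - (-(2⁻¹ : ℚ)) ^ n) / n.factorial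

/-- even part coefficient -/
def qb (n : ℕ) : ℚ := 2 * ((2⁻¹ : ℚ) ^ n + (-(2⁻¹ : ℚ)) ^ n) / n.factorial

lemma qa_even (k : ℕ) : qa (2 * k) = 0 := by
  rw [qa, Even.neg_pow (even_two_mul k)]; simp

lemma qb_odd (k : ℕ) : qb (2 * k + 1) = 0 := by
  rw [qb, Odd.neg_pow ⟨k, by ring⟩]; simp

lemma coeff_rescale_exp (c : ℚ) (n : ℕ) :
    coeff n (rescale (algebraMap ℚ K c) (exp K)) =
      algebraMap ℚ K (c ^ n / n.factorial) := by
  rw [coeff_rescale, coeff_exp, ← map_pow, ← map_mul, mul_one_div]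

/-- version of `DserK` with `+ C (-t)` in the second factor -/
lemma DserK_eq : DserK =
    rescale (algebraMap ℚ K (1 / 2)) (exp K) *
      (1 + PowerSeries.C t * X) ^ 2 -
    rescale (algebraMap ℚ K (-(1 / 2))) (exp K) *
      (1 + PowerSeries.C (-t) * X) ^ 2 := by
  have h : (1 + PowerSeries.C (-t) * X) = (1 - PowerSeries.C t * X) := by
    rw [map_neg]; ring
  rw [DserK, h]

lemma coeff_sq (f : K⟦X⟧) (a : K) (n : ℕ) :
    coeff (n + 2) (f * (1 + PowerSeries.C a * X) ^ 2) =
      coeff (n + 2) f + 2 * a * coeff (n + 1) f + a ^ 2 * coeff n f := by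
  have h : (1 + PowerSeries.C a * X) ^ 2
      = 1 + PowerSeries.C (2 * a) * X + PowerSeries.C (a ^ 2) * X ^ 2 := by
    simp only [map_mul, map_pow, map_ofNat]; ring
  have e1 : f * (1 + PowerSeries.C (2 * a) * X + PowerSeries.C (a ^ 2) * X ^ 2)
      = f + (f * PowerSeries.C (2 * a)) * X + ((f * PowerSeries.C (a ^ 2)) * X) * X := by
    ring
  rw [h, e1]
  simp only [map_add, coeff_succ_mul_X, coeff_mul_C]
  ring

lemma coeff_sq1 (f : K⟦X⟧) (a : K) :
    coeff 1 (f * (1 + PowerSeries.C a * X) ^ 2) =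
      coeff 1 f + 2 * a * coeff 0 f := by
  have h : (1 + PowerSeries.C a * X) ^ 2
      = 1 + PowerSeries.C (2 * a) * X + PowerSeries.C (a ^ 2) * X ^ 2 := by
    simp only [map_mul, map_pow, map_ofNat]; ring
  have e1 : f * (1 + PowerSeries.C (2 * a) * X + PowerSeries.C (a ^ 2) * X ^ 2)
      = f + (f * PowerSeries.C (2 * a)) * X + ((f * PowerSeries.C (a ^ 2)) * X) * X := by
    ring
  rw [h, e1, map_add, map_add]
  show coeff 1 f + coeff (0 + 1) (f * PowerSeries.C (2 * a) * X) +
    coeff (0 + 1) (f * PowerSeries.C (a ^ 2) * X * X) = _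
  rw [coeff_succ_mul_X,
    coeff_succ_mul_X, coeff_zero_mul_X, coeff_mul_C]
  ring

lemma coeff_sq0 (f : K⟦X⟧) (a : K) :
    coeff 0 (f * (1 + PowerSeries.C a * X) ^ 2) = coeff 0 f := by
  have h : (1 + PowerSeries.C a * X) ^ 2
      = 1 + PowerSeries.C (2 * a) * X + PowerSeries.C (a ^ 2) * X ^ 2 := by
    simp only [map_mul, map_pow, map_ofNat]; ring
  have e1 : f * (1 + PowerSeries.C (2 * a) * X + PowerSeries.C (a ^ 2) * X ^ 2)
      = f + (f * PowerSeries.C (2 * a)) * X + ((f * PowerSeries.C (a ^ 2)) * X) * X := by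
    ring
  rw [h, e1]
  simp

lemma coeff_D (n : ℕ) :
    coeff (n + 2) DserK = algebraMap ℚ K (qa (n + 2)) +
      algebraMap ℚ K (qb (n + 1)) * t + algebraMap ℚ K (qa n) * t ^ 2 := by
  rw [DserK_eq, map_sub, coeff_sq, coeff_sq, coeff_rescale_exp, coeff_rescale_exp,
    coeff_rescale_exp, coeff_rescale_exp, coeff_rescale_exp, coeff_rescale_exp]
  simp only [qa, qb, map_div₀, map_sub, map_add, map_mul, map_pow, map_neg, map_one,
    map_ofNat, map_natCast, map_inv₀, one_div]
  ring

lemma coeff_D_zero : coeff 0 DserK = 0 := by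
  rw [DserK_eq, map_sub, coeff_sq0, coeff_sq0, coeff_rescale_exp, coeff_rescale_exp]
  simp

lemma coeff_D_one : coeff 1 DserK = 1 + 4 * t := by
  rw [DserK_eq, map_sub, coeff_sq1, coeff_sq1, coeff_rescale_exp, coeff_rescale_exp,
    coeff_rescale_exp, coeff_rescale_exp]
  have e1 : ((1/2 : ℚ) ^ (1:ℕ) / ((1:ℕ).factorial : ℚ) : ℚ) = 1/2 := by
    norm_num [Nat.factorial]
  have e2 : ((1/2 : ℚ) ^ (0:ℕ) / ((0:ℕ).factorial : ℚ) : ℚ) = 1 := by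
    norm_num [Nat.factorial]
  have e3 : ((-(1/2) : ℚ) ^ (1:ℕ) / ((1:ℕ).factorial : ℚ) : ℚ) = -(1/2) := by
    norm_num [Nat.factorial]
  have e4 : ((-(1/2) : ℚ) ^ (0:ℕ) / ((0:ℕ).factorial : ℚ) : ℚ) = 1 := by
    norm_num [Nat.factorial]
  rw [e1, e2, e3, e4, map_one]
  have h : algebraMap ℚ K (1/2) - algebraMap ℚ K (-(1/2)) = 1 := by
    rw [← map_sub]
    norm_num
  linear_combination h

lemma coeff_D_even (k : ℕ) : coeff (2 * k) DserK = 0 := by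
  cases k with
  | zero => simpa using coeff_D_zero
  | succ k =>
    have h2 : 2 * (k + 1) = 2 * k + 2 := by ring
    rw [h2, coeff_D, show 2 * k + 2 = 2 * (k + 1) from by ring, qa_even,
      show 2 * k + 1 = 2 * k + 1 from rfl, qb_odd, qa_even]
    simp

lemma Dle_coeff_D (n : ℕ) : Dle (coeff (n + 2) DserK) 2 := by
  rw [coeff_D]
  refine Dle_add (Dle_add ((Dle_algebraMap _).mono (by norm_num)) ?_) ?_
  · have := Dle_mul (Dle_algebraMap (qb (n + 1))) Dle_t
    simpa using this.mono (by norm_num)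
  · have := Dle_mul (Dle_algebraMap (qa n)) (Dle_mul Dle_t Dle_t)
    simpa [pow_two] using this

/-! ### `U` and `V = U⁻¹` -/

/-- `U = D/Y` -/
def U : K⟦X⟧ := PowerSeries.mk fun n => coeff (n + 1) DserK

/-- `V = Y/D` -/
def V : K⟦X⟧ := U⁻¹

lemma D_eq_X_mul_U : DserK = X * U := by
  ext n
  cases n with
  | zero => simp [coeff_D_zero]
  | succ n => rw [coeff_succ_X_mul, U, coeff_mk]

lemma constantCoeff_U : constantCoeff U = 1 + 4 * t := by
  rw [← coeff_zero_eq_constantCoeff, U, coeff_mk, coeff_D_one]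

lemma U_mul_V : U * V = 1 :=
  PowerSeries.mul_inv_cancel U (by rw [constantCoeff_U]; exact p0_ne)

/-- coefficients of `V` -/
def vc (n : ℕ) : K := coeff n V

lemma uc_eq (n : ℕ) : coeff n U = coeff (n + 1) DserK := by rw [U, coeff_mk]

lemma vc_zero : vc 0 = (1 + 4 * t)⁻¹ := by
  have h := congrArg (constantCoeff) U_mul_V
  rw [map_mul, map_one, constantCoeff_U] at h
  rw [vc, coeff_zero_eq_constantCoeff]
  exact (eq_inv_of_mul_eq_one_left (by rw [mul_comm] at h; exact h)).symm ▸
    (inv_eq_of_mul_eq_one_right h).symm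

lemma hrec (n : ℕ) : (1 + 4 * t) * vc (n + 1) =
    -∑ k ∈ Finset.range (n + 1), coeff (k + 2) DserK * vc (n - k) := by
  have h := congrArg (coeff (n + 1)) U_mul_V
  rw [coeff_mul, Finset.Nat.sum_antidiagonal_eq_sum_range_succ_mk, coeff_one,
    if_neg (Nat.succ_ne_zero n), Finset.sum_range_succ'] at h
  simp only [Nat.succ_sub_succ] at h
  rw [uc_eq, coeff_D_one, Nat.sub_zero] at h
  have : ∀ k, coeff (k + 1) U = coeff (k + 2) DserK := fun k => uc_eq (k + 1)
  simp only [this] at h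
  show (1 + 4 * t) * coeff (n + 1) V =
    -∑ k ∈ Finset.range (n + 1), coeff (k + 2) DserK * coeff (n - k) V
  linear_combination h

lemma vc_odd (j : ℕ) : vc (2 * j + 1) = 0 := by
  induction j using Nat.strong_induction_on with
  | _ j IH =>
    have h := hrec (2 * j)
    have hz : ∀ k ∈ Finset.range (2 * j + 1),
        coeff (k + 2) DserK * vc (2 * j - k) = 0 := by
      intro k hk
      rcases Nat.even_or_odd k with ⟨m, hm⟩ | ⟨m, hm⟩
      · have : k + 2 = 2 * (m + 1) := by omega
        rw [this, coeff_D_even, zero_mul]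
      · have hk' : k < 2 * j + 1 := Finset.mem_range.1 hk
        have hmj : m < j := by omega
        have : 2 * j - k = 2 * (j - m - 1) + 1 := by omega
        rw [this, IH _ (by omega), mul_zero]
    rw [Finset.sum_eq_zero hz, neg_zero] at h
    rcases mul_eq_zero.1 h with h' | h'
    · exact absurd h' p0_ne
    · exact h'

/-! ### Leading terms -/

/-- leading coefficient `(-1)^s / 4^(s+1)` -/
def Lc (s : ℕ) : ℚ := (-1) ^ s / 4 ^ (s + 1)

/-- leading term -/
def Lt (s : ℕ) : K := RatFunc.C (Lc s) * t ^ ((s : ℤ) - 1)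

lemma Lc_ne (s : ℕ) : Lc s ≠ 0 := by
  rw [Lc]
  positivity

lemma Lt_intDegree (s : ℕ) : (Lt s).intDegree = (s : ℤ) - 1 := by
  rw [Lt, RatFunc.intDegree_mul (C_ne_zero (Lc_ne s)) (zpow_ne_zero _ RatFunc.X_ne_zero),
    RatFunc.intDegree_C, intDegree_X_zpow, zero_add]

lemma Dle_Lt (s : ℕ) : Dle (Lt s) ((s : ℤ) - 1) := Or.inr (Lt_intDegree s).le

lemma hcancel (s : ℕ) : t ^ 2 * Lt s + 4 * t * Lt (s + 1) = 0 := by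
  rw [Lt, Lt]
  have h1 : (t : K) ^ (2 : ℕ) * t ^ ((s : ℤ) - 1) = t ^ ((s : ℤ) + 1) := by
    rw [← zpow_natCast (t : K) 2, ← zpow_add₀ RatFunc.X_ne_zero]
    congr 1
    push_cast
    ring
  have h2 : (t : K) * t ^ ((((s + 1 : ℕ)) : ℤ) - 1) = t ^ ((s : ℤ) + 1) := by
    rw [show ((((s + 1 : ℕ)) : ℤ) - 1) = (s : ℤ) from by push_cast; ring,
      zpow_add_one₀ RatFunc.X_ne_zero, ]
    ring
  have hC : RatFunc.C (Lc s) + 4 * RatFunc.C (Lc (s + 1)) = 0 := by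
    have hc : Lc s + 4 * Lc (s + 1) = 0 := by
      rw [Lc, Lc]
      field_simp
      ring
    have := congrArg RatFunc.C hc
    rw [map_add, map_mul, map_ofNat, map_zero] at this
    exact this
  linear_combination (RatFunc.C (Lc s)) * h1 + (4 * RatFunc.C (Lc (s + 1))) * h2 +
    ((t : K) ^ ((s : ℤ) + 1)) * hC

/-! ### Main induction -/

lemma vc_even (s : ℕ) : Dle (vc (2 * s) - Lt s) ((s : ℤ) - 2) := by
  induction s using Nat.strong_induction_on with
  | _ s IH =>
    cases s with
    | zero =>
      have hC14 : RatFunc.C (Lc 0) = (4 : K)⁻¹ := by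
        rw [show Lc 0 = (4 : ℚ)⁻¹ from by norm_num [Lc], map_inv₀, map_ofNat]
      have h0 : vc (2 * 0) - Lt 0 = -((4 : K)⁻¹ * t⁻¹ * (1 + 4 * t)⁻¹) := by
        rw [show (2 * 0 : ℕ) = 0 from rfl, vc_zero, Lt, hC14,
          show ((0 : ℕ) : ℤ) - 1 = -1 from by norm_num, zpow_neg, zpow_one]
        have h4 : (4 : K) ≠ 0 := by
          rw [show (4 : K) = RatFunc.C 4 from (map_ofNat _ 4).symm]
          exact C_ne_zero (by norm_num)
        have i1 : (1 + 4 * t) * (1 + 4 * t)⁻¹ = 1 := mul_inv_cancel₀ p0_ne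
        have i2 : (t : K) * t⁻¹ = 1 := mul_inv_cancel₀ RatFunc.X_ne_zero
        have i3 : (4 : K) * (4 : K)⁻¹ = 1 := mul_inv_cancel₀ h4
        linear_combination ((4 : K)⁻¹ * t⁻¹) * i1 -
          ((1 + 4 * t)⁻¹ * t⁻¹ * t) * i3 - (1 + 4 * t)⁻¹ * i2
      rw [h0]
      refine Or.inr ?_
      have h4 : (4 : K)⁻¹ ≠ 0 := by
        apply inv_ne_zero
        rw [show (4 : K) = RatFunc.C 4 from (map_ofNat _ 4).symm]
        exact C_ne_zero (by norm_num)
      have hti : (t⁻¹ : K) ≠ 0 := inv_ne_zero RatFunc.X_ne_zero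
      have hpi : ((1 + 4 * t)⁻¹ : K) ≠ 0 := inv_ne_zero p0_ne
      rw [RatFunc.intDegree_neg,
        RatFunc.intDegree_mul (mul_ne_zero h4 hti) hpi,
        RatFunc.intDegree_mul h4 hti,
        show (4 : K)⁻¹ = RatFunc.C (4 : ℚ)⁻¹ from by rw [map_inv₀, map_ofNat],
        RatFunc.intDegree_C, intDegree_inv RatFunc.X_ne_zero,
        intDegree_inv p0_ne, RatFunc.intDegree_X, p0_intDegree]
      norm_num
    | succ s =>
      have hvc : ∀ m, m ≤ s → Dle (vc (2 * m)) ((m : ℤ) - 1) := by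
        intro m hm
        have h1 := IH m (Nat.lt_succ_of_le hm)
        rw [show vc (2 * m) = (vc (2 * m) - Lt m) + Lt m from by ring]
        exact Dle_add (h1.mono (by omega)) (Dle_Lt m)
      have hd3 : coeff 3 DserK = RatFunc.C (1/24) + RatFunc.C (1/2) * t + t ^ 2 := by
        have hqa3 : qa 3 = 1/24 := by norm_num [qa, Nat.factorial]
        have hqb2 : qb 2 = 1/2 := by norm_num [qb, Nat.factorial]
        have hqa1 : qa 1 = 1 := by norm_num [qa, Nat.factorial]
        rw [show (3 : ℕ) = 1 + 2 from rfl, coeff_D, hqa3, hqb2, hqa1, map_one, one_mul]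
        simp only [algebraMap_eq_C']
      have hr := hrec (2 * s + 1)
      have h1S : (1 : ℕ) ∈ Finset.range (2 * s + 2) := Finset.mem_range.2 (by omega)
      rw [← Finset.add_sum_erase (Finset.range (2 * s + 2))
        (fun k => coeff (k + 2) DserK * vc (2 * s + 1 - k)) h1S] at hr
      simp only [show (1 : ℕ) + 2 = 3 from rfl, show 2 * s + 1 - 1 = 2 * s from by omega,
        hd3] at hr
      have hE : (1 + 4 * t) * (vc (2 * (s + 1)) - Lt (s + 1)) =
          -((RatFunc.C (1/24) + RatFunc.C (1/2) * t) * vc (2 * s))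
          - t ^ 2 * (vc (2 * s) - Lt s)
          - (∑ k ∈ (Finset.range (2 * s + 2)).erase 1,
              coeff (k + 2) DserK * vc (2 * s + 1 - k))
          - Lt (s + 1) := by
        rw [show (2 * (s + 1) : ℕ) = 2 * s + 1 + 1 from by ring]
        linear_combination hr - hcancel s
      rw [show (((s + 1 : ℕ)) : ℤ) - 2 = ((s : ℤ) - 1) from by push_cast; ring]
      apply Dle_cancel_p0 (d := (s : ℤ) - 1)
      rw [hE, show ((s : ℤ) - 1) + 1 = (s : ℤ) from by ring]
      have ha : Dle ((RatFunc.C (1/24) + RatFunc.C (1/2) * t) * vc (2 * s)) (s : ℤ) := by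
        have h1 : Dle (RatFunc.C (1/24 : ℚ) + RatFunc.C (1/2 : ℚ) * t) 1 :=
          Dle_add ((Dle_C _).mono (by norm_num))
            (by simpa using Dle_mul (Dle_C (1/2 : ℚ)) Dle_t)
        have := Dle_mul h1 (hvc s le_rfl)
        exact this.mono (by omega)
      have hb : Dle (t ^ 2 * (vc (2 * s) - Lt s)) (s : ℤ) := by
        have h2 : Dle ((t : K) ^ 2) 2 := by
          rw [pow_two]; simpa using Dle_mul Dle_t Dle_t
        have := Dle_mul h2 (IH s (Nat.lt_succ_self s))
        exact this.mono (by omega)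
      have hc : Dle (∑ k ∈ (Finset.range (2 * s + 2)).erase 1,
          coeff (k + 2) DserK * vc (2 * s + 1 - k)) (s : ℤ) := by
        apply Dle_sum
        intro k hk
        have hk1 : k ≠ 1 := Finset.ne_of_mem_erase hk
        have hkr : k < 2 * s + 2 := Finset.mem_range.1 (Finset.mem_of_mem_erase hk)
        rcases Nat.even_or_odd k with ⟨m, hm⟩ | ⟨m, hm⟩
        · rw [show k + 2 = 2 * (m + 1) from by omega, coeff_D_even, zero_mul]
          exact Dle_zero _
        · have hm1 : 1 ≤ m := by omega
          have hms : m ≤ s := by omega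
          rw [show 2 * s + 1 - k = 2 * (s - m) from by omega]
          have h2 : Dle (vc (2 * (s - m))) (((s - m : ℕ) : ℤ) - 1) := hvc (s - m) (by omega)
          exact (Dle_mul (Dle_coeff_D k) h2).mono (by omega)
      have hdL : Dle (Lt (s + 1)) (s : ℤ) :=
        (Dle_Lt (s + 1)).mono (by push_cast; omega)
      exact Dle_sub (Dle_sub (Dle_sub (Dle_neg ha) hb) hc) hdL

/-! ### Reduction of the residue -/

lemma Fres_eq (lam : ℚ) (s : ℕ) : Fres lam 0 (s : ℤ) = vc (2 * s) := by
  have hUV : ((U : K⟦X⟧) : LaurentSeries K) * ((V : K⟦X⟧) : LaurentSeries K) = 1 := by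
    rw [← PowerSeries.coe_mul, U_mul_V, PowerSeries.coe_one]
  have hW : ((X : K⟦X⟧) : LaurentSeries K) ^ (2 * (s : ℤ)) *
      ((DserK : K⟦X⟧) : LaurentSeries K)
      = HahnSeries.single ((2 * s + 1 : ℕ) : ℤ) 1 * ((U : K⟦X⟧) : LaurentSeries K) := by
    calc ((X : K⟦X⟧) : LaurentSeries K) ^ (2 * (s : ℤ)) * ((DserK : K⟦X⟧) : LaurentSeries K)
        = ((X : K⟦X⟧) : LaurentSeries K) ^ (2 * s : ℕ) *
            ((DserK : K⟦X⟧) : LaurentSeries K) := by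
          rw [show (2 * (s : ℤ)) = ((2 * s : ℕ) : ℤ) from by push_cast; ring, zpow_natCast]
      _ = (((X ^ (2 * s) * DserK : K⟦X⟧)) : LaurentSeries K) := by
          rw [PowerSeries.coe_mul, PowerSeries.coe_pow]
      _ = (((X ^ (2 * s + 1) * U : K⟦X⟧)) : LaurentSeries K) := by
          rw [D_eq_X_mul_U, pow_succ]; ring_nf
      _ = (((X ^ (2 * s + 1) : K⟦X⟧)) : LaurentSeries K) *
            ((U : K⟦X⟧) : LaurentSeries K) := PowerSeries.coe_mul _ _
      _ = HahnSeries.single ((2 * s + 1 : ℕ) : ℤ) 1 * ((U : K⟦X⟧) : LaurentSeries K) := by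
          rw [show (((X ^ (2 * s + 1) : K⟦X⟧)) : LaurentSeries K)
            = HahnSeries.single ((2 * s + 1 : ℕ) : ℤ) 1 from
            HahnSeries.ofPowerSeries_X_pow (2 * s + 1)]
  have hinv : (HahnSeries.single ((2 * s + 1 : ℕ) : ℤ) 1 *
      ((U : K⟦X⟧) : LaurentSeries K))⁻¹
      = HahnSeries.single (-((2 * s + 1 : ℕ) : ℤ)) 1 * ((V : K⟦X⟧) : LaurentSeries K) := by
    apply inv_eq_of_mul_eq_one_right
    calc (HahnSeries.single ((2 * s + 1 : ℕ) : ℤ) 1 * ((U : K⟦X⟧) : LaurentSeries K)) *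
        (HahnSeries.single (-((2 * s + 1 : ℕ) : ℤ)) 1 * ((V : K⟦X⟧) : LaurentSeries K))
        = (HahnSeries.single ((2 * s + 1 : ℕ) : ℤ) 1 *
            HahnSeries.single (-((2 * s + 1 : ℕ) : ℤ)) 1) *
            (((U : K⟦X⟧) : LaurentSeries K) * ((V : K⟦X⟧) : LaurentSeries K)) := by ring
      _ = 1 := by
          rw [HahnSeries.single_mul_single, add_neg_cancel, one_mul, hUV, mul_one,
            HahnSeries.single_zero_one]
  rw [Fres, pow_zero, PowerSeries.coe_one, one_div, hW, hinv]
  rw [show (-1 : ℤ) = ((2 * s : ℕ) : ℤ) + -((2 * s + 1 : ℕ) : ℤ) from by push_cast; ring,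
    HahnSeries.coeff_single_mul_add, one_mul, LaurentSeries.coeff_coe_powerSeries]
  rfl

lemma hG (s : ℕ) : ((-1 : K)) ^ s * (2 : K) ^ (-(2 * (s : ℤ)) - 2) * t ^ ((s : ℤ) - 1)
    = Lt s := by
  have h2 : (2 : ℚ) ^ (-(2 * (s : ℤ)) - 2) = ((4 : ℚ) ^ (s + 1))⁻¹ := by
    rw [show (-(2 * (s : ℤ)) - 2) = -(((2 * s + 2 : ℕ)) : ℤ) from by push_cast; ring,
      zpow_neg, zpow_natCast, show (2 * s + 2 : ℕ) = 2 * (s + 1) from by ring, pow_mul]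
    norm_num
  have hc : ((-1 : K)) ^ s * (2 : K) ^ (-(2 * (s : ℤ)) - 2) = RatFunc.C (Lc s) := by
    rw [show (-1 : K) = RatFunc.C (-1 : ℚ) from by rw [map_neg, map_one],
      show (2 : K) = RatFunc.C (2 : ℚ) from by rw [map_ofNat],
      ← map_pow, ← map_zpow₀, ← map_mul]
    congr 1
    rw [h2, Lc, div_eq_mul_inv]
  rw [Lt, ← hc]

end

end Stmt14

theorem Fres_zero_leading_term (lam : ℚ) (s : ℕ) :
    Fres lam 0 s - (-1) ^ s * (2 : RatFunc ℚ) ^ (-(2 * (s : ℤ)) - 2) *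
        RatFunc.X ^ ((s : ℤ) - 1) = 0 ∨
      (Fres lam 0 s - (-1) ^ s * (2 : RatFunc ℚ) ^ (-(2 * (s : ℤ)) - 2) *
        RatFunc.X ^ ((s : ℤ) - 1)).intDegree < (s : ℤ) - 1 := by
  have h := Stmt14.vc_even s
  rw [← Stmt14.Fres_eq lam s, ← Stmt14.hG s] at h
  rcases h with h | h
  · exact Or.inl h
  · exact Or.inr (by linarith)
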